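/- Let Z be a sparsity pattern with associated digraph G, and let k ≥ 0 and q ≥ 1 be integers. Then the maximum flow value θ̂(k,q) on the unit-capacity digraph 𝒢̂ equals the maximum flow value θ(k,q) on the weighted digraph 𝒢. -/

import Mathlib

/-- A flow on a finite capacitated digraph (capacity `0` encodes the absence of an edge):
nonnegative, below capacity, and conserved at every node other than `s` and `t`. -/
def IsFlow {V : Type*} [Fintype V] (c : V → V → ℝ) (s t : V) (f : V → V → ℝ) : Prop :=
  (∀ u v, 0 ≤ f u v) ∧ (∀ u v, f u v ≤ c u v) ∧
    ∀ v, v ≠ s → v ≠ t → (∑ u, f u v) = ∑ w, f v w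

/-- The value of a flow: total flow on edges leaving the source `s`. -/
def flowValue {V : Type*} [Fintype V] (s : V) (f : V → V → ℝ) : ℝ := ∑ w, f s w

/-- The maximum flow value: the supremum of the values of all flows. -/
noncomputable def maxFlow {V : Type*} [Fintype V] (c : V → V → ℝ) (s t : V) : ℝ :=
  sSup {x : ℝ | ∃ f, IsFlow c s t f ∧ x = flowValue s f}

/-- The node set of the weighted digraph `𝒢`: source `s`, sink `t`, nodes `λ_i`
(copies of the control nodes), `ν_j` and `μ_j` (two copies of the state nodes). -/
inductive GNode (n m : ℕ) where
  | s : GNode n m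
  | t : GNode n m
  | lam : Fin m → GNode n m
  | nu : Fin n → GNode n m
  | mu : Fin n → GNode n m
deriving DecidableEq, Fintype

/-- The capacities of the weighted digraph `𝒢` built from `Z` and `(k, q)`. -/
def capG {n m : ℕ} (Z : Finset (Fin n × (Fin n ⊕ Fin m))) (k q : ℕ) :
    GNode n m → GNode n m → ℝ
  | .s, .lam _ => (k + 1 : ℕ)
  | .s, .nu _ => (q * (k + 1) : ℕ)
  | .lam i, .mu j => if (j, Sum.inr i) ∈ Z then ((k + 1 : ℕ) : ℝ) else 0
  | .nu i, .mu j => if (j, Sum.inl i) ∈ Z then ((q * (k + 1) : ℕ) : ℝ) else 0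
  | .mu _, .t => (q : ℕ)
  | _, _ => 0


/-- The node set of the unit-capacity digraph `𝒢̂`: source `s`, sink `t`, nodes
`λ_{ℓi}`, `ν_{ℓpj}` and `μ_{pj}`. -/
inductive HNode (n m k q : ℕ) where
  | s : HNode n m k q
  | t : HNode n m k q
  | lam : Fin (k + 1) → Fin m → HNode n m k q
  | nu : Fin (k + 1) → Fin q → Fin n → HNode n m k q
  | mu : Fin q → Fin n → HNode n m k q
deriving DecidableEq, Fintype

/-- The (unit) capacities of the digraph `𝒢̂` built from `Z` and `(k, q)`. -/
def capH {n m : ℕ} (Z : Finset (Fin n × (Fin n ⊕ Fin m))) (k q : ℕ) :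
    HNode n m k q → HNode n m k q → ℝ
  | .s, .lam _ _ => 1
  | .s, .nu _ _ _ => 1
  | .lam _ i, .mu _ j => if (j, Sum.inr i) ∈ Z then 1 else 0
  | .nu _ p i, .mu p' j => if p = p' ∧ (j, Sum.inl i) ∈ Z then 1 else 0
  | .mu _ _, .t => 1
  | _, _ => 0

/-! ### Auxiliary material -/

set_option linter.unusedVariables false

section Aux

def eG (n m : ℕ) : Unit ⊕ Unit ⊕ Fin m ⊕ Fin n ⊕ Fin n ≃ GNode n m where
  toFun x := match x with
    | .inl _ => .s
    | .inr (.inl _) => .t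
    | .inr (.inr (.inl i)) => .lam i
    | .inr (.inr (.inr (.inl j))) => .nu j
    | .inr (.inr (.inr (.inr j))) => .mu j
  invFun x := match x with
    | .s => .inl ()
    | .t => .inr (.inl ())
    | .lam i => .inr (.inr (.inl i))
    | .nu j => .inr (.inr (.inr (.inl j)))
    | .mu j => .inr (.inr (.inr (.inr j)))
  left_inv := by rintro (_|_|_|_|_) <;> rfl
  right_inv := by rintro (_|_|_|_|_) <;> rfl

lemma sumG {n m : ℕ} (F : GNode n m → ℝ) :
    ∑ x, F x = F .s + F .t + (∑ i, F (.lam i)) + (∑ j, F (.nu j)) + (∑ j, F (.mu j)) := by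
  rw [← Equiv.sum_comp (eG n m) F]
  simp [Fintype.sum_sum_type, eG, add_assoc]

def eH (n m k q : ℕ) :
    Unit ⊕ Unit ⊕ (Fin (k+1) × Fin m) ⊕ (Fin (k+1) × Fin q × Fin n) ⊕ (Fin q × Fin n)
      ≃ HNode n m k q where
  toFun x := match x with
    | .inl _ => .s
    | .inr (.inl _) => .t
    | .inr (.inr (.inl (l, i))) => .lam l i
    | .inr (.inr (.inr (.inl (l, p, j)))) => .nu l p j
    | .inr (.inr (.inr (.inr (p, j)))) => .mu p j
  invFun x := match x with
    | .s => .inl ()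
    | .t => .inr (.inl ())
    | .lam l i => .inr (.inr (.inl (l, i)))
    | .nu l p j => .inr (.inr (.inr (.inl (l, p, j))))
    | .mu p j => .inr (.inr (.inr (.inr (p, j))))
  left_inv := by rintro (_|_|⟨_,_⟩|⟨_,_,_⟩|⟨_,_⟩) <;> rfl
  right_inv := by rintro (_|_|_|_|_) <;> rfl

lemma sumH {n m k q : ℕ} (F : HNode n m k q → ℝ) :
    ∑ x, F x = F .s + F .t + (∑ l, ∑ i, F (.lam l i)) + (∑ l, ∑ p, ∑ j, F (.nu l p j))
      + (∑ p, ∑ j, F (.mu p j)) := by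
  rw [← Equiv.sum_comp (eH n m k q) F]
  simp [Fintype.sum_sum_type, Fintype.sum_prod_type, eH, add_assoc]

lemma sum_rot {α β γ : Type*} [Fintype α] [Fintype β] [Fintype γ] (F : α → β → γ → ℝ) :
    ∑ a, ∑ b, ∑ c, F a b c = ∑ c, ∑ a, ∑ b, F a b c :=
  calc ∑ a, ∑ b, ∑ c, F a b c = ∑ a, ∑ c, ∑ b, F a b c :=
        Finset.sum_congr rfl (fun a _ => Finset.sum_comm)
    _ = ∑ c, ∑ a, ∑ b, F a b c := Finset.sum_comm

variable {n m : ℕ} {Z : Finset (Fin n × (Fin n ⊕ Fin m))} {k q : ℕ}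

/-! #### Flows on `𝒢̂` -/

lemma hf0 {f : HNode n m k q → HNode n m k q → ℝ} (hf : IsFlow (capH Z k q) .s .t f) :
    ∀ u v, capH Z k q u v = 0 → f u v = 0 :=
  fun u v h => le_antisymm (h ▸ hf.2.1 u v) (hf.1 u v)

variable {f : HNode n m k q → HNode n m k q → ℝ} (hf : IsFlow (capH Z k q) .s .t f)
include hf

lemma znu (l : Fin (k+1)) (p : Fin q) (j : Fin n) :
    ∀ p' i', p' ≠ p → f (.nu l p j) (.mu p' i') = 0 := fun p' i' h =>
  hf0 hf _ _ (if_neg (fun hh => h hh.1.symm))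

lemma znu' (p : Fin q) (j : Fin n) :
    ∀ (l : Fin (k+1)) p' i', p' ≠ p → f (.nu l p' i') (.mu p j) = 0 := fun l p' i' h =>
  hf0 hf _ _ (if_neg (fun hh => h hh.1))

lemma L1 (l : Fin (k+1)) (i : Fin m) :
    f .s (.lam l i) = ∑ p, ∑ j, f (.lam l i) (.mu p j) := by
  have z1 : ∀ u : HNode n m k q, f u .s = 0 := fun u => by cases u <;> exact hf0 hf _ _ rfl
  have hc := hf.2.2 (.lam l i) (by simp) (by simp)
  rw [sumH (fun u => f u (.lam l i)), sumH (fun w => f (.lam l i) w)] at hc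
  simpa [z1, hf0 hf .t (.lam l i) rfl, hf0 hf (.lam l i) .t rfl,
    show ∀ a b c d, f (HNode.lam a b) (HNode.lam c d) = 0 from fun _ _ _ _ => hf0 hf _ _ rfl,
    show ∀ a b c d e, f (HNode.nu a b c) (HNode.lam d e) = 0 from fun _ _ _ _ _ => hf0 hf _ _ rfl,
    show ∀ a b c d, f (HNode.mu a b) (HNode.lam c d) = 0 from fun _ _ _ _ => hf0 hf _ _ rfl,
    show ∀ a b c d e, f (HNode.lam a b) (HNode.nu c d e) = 0 from fun _ _ _ _ _ => hf0 hf _ _ rfl]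
    using hc

lemma L2 (l : Fin (k+1)) (p : Fin q) (j : Fin n) :
    f .s (.nu l p j) = ∑ i, f (.nu l p j) (.mu p i) := by
  have z1 : ∀ u : HNode n m k q, f u .s = 0 := fun u => by cases u <;> exact hf0 hf _ _ rfl
  have hc := hf.2.2 (.nu l p j) (by simp) (by simp)
  rw [sumH (fun u => f u (.nu l p j)), sumH (fun w => f (.nu l p j) w)] at hc
  simp only [z1, hf0 hf .t (.nu l p j) rfl, hf0 hf (.nu l p j) .t rfl,
    show ∀ a b, f (HNode.lam a b) (HNode.nu l p j) = 0 from fun _ _ => hf0 hf _ _ rfl,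
    show ∀ a b c, f (HNode.nu a b c) (HNode.nu l p j) = 0 from fun _ _ _ => hf0 hf _ _ rfl,
    show ∀ a b, f (HNode.mu a b) (HNode.nu l p j) = 0 from fun _ _ => hf0 hf _ _ rfl,
    show ∀ a b, f (HNode.nu l p j) (HNode.lam a b) = 0 from fun _ _ => hf0 hf _ _ rfl,
    show ∀ a b c, f (HNode.nu l p j) (HNode.nu a b c) = 0 from fun _ _ _ => hf0 hf _ _ rfl,
    Finset.sum_const_zero, add_zero, zero_add] at hc
  rw [hc, Finset.sum_eq_single_of_mem p (Finset.mem_univ p)]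
  intro p' _ hne
  exact Finset.sum_eq_zero fun i' _ => znu hf l p j p' i' hne

lemma L3 (p : Fin q) (j : Fin n) :
    (∑ l, ∑ i, f (.lam l i) (.mu p j)) + (∑ l, ∑ i, f (.nu l p i) (.mu p j))
      = f (.mu p j) .t := by
  have z1 : ∀ u : HNode n m k q, f u .s = 0 := fun u => by cases u <;> exact hf0 hf _ _ rfl
  have hc := hf.2.2 (.mu p j) (by simp) (by simp)
  rw [sumH (fun u => f u (.mu p j)), sumH (fun w => f (.mu p j) w)] at hc
  simp only [z1, hf0 hf .s (.mu p j) rfl, hf0 hf .t (.mu p j) rfl,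
    show ∀ a b, f (HNode.mu a b) (HNode.mu p j) = 0 from fun _ _ => hf0 hf _ _ rfl,
    show ∀ a b, f (HNode.mu p j) (HNode.lam a b) = 0 from fun _ _ => hf0 hf _ _ rfl,
    show ∀ a b c, f (HNode.mu p j) (HNode.nu a b c) = 0 from fun _ _ _ => hf0 hf _ _ rfl,
    show ∀ a b, f (HNode.mu p j) (HNode.mu a b) = 0 from fun _ _ => hf0 hf _ _ rfl,
    Finset.sum_const_zero, add_zero, zero_add] at hc
  have inner : ∀ l : Fin (k+1), (∑ p' : Fin q, ∑ i, f (.nu l p' i) (.mu p j))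
      = ∑ i, f (.nu l p i) (.mu p j) := by
    intro l
    rw [Finset.sum_eq_single_of_mem p (Finset.mem_univ p)]
    intro p' _ hne
    exact Finset.sum_eq_zero fun i' _ => znu' hf p j l p' i' hne
  rw [Finset.sum_congr rfl (fun l _ => inner l)] at hc
  exact hc

omit hf

/-! #### Flows on `𝒢` -/

lemma hg0 {g : GNode n m → GNode n m → ℝ} (hg : IsFlow (capG Z k q) .s .t g) :
    ∀ u v, capG Z k q u v = 0 → g u v = 0 :=
  fun u v h => le_antisymm (h ▸ hg.2.1 u v) (hg.1 u v)

variable {g : GNode n m → GNode n m → ℝ} (hg : IsFlow (capG Z k q) .s .t g)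
include hg

lemma M1 (i : Fin m) : g .s (.lam i) = ∑ j, g (.lam i) (.mu j) := by
  have z1 : ∀ u : GNode n m, g u .s = 0 := fun u => by cases u <;> exact hg0 hg _ _ rfl
  have hc := hg.2.2 (.lam i) (by simp) (by simp)
  rw [sumG (fun u => g u (.lam i)), sumG (fun w => g (.lam i) w)] at hc
  simpa [z1, hg0 hg .t (.lam i) rfl, hg0 hg (.lam i) .t rfl,
    show ∀ a b, g (GNode.lam a) (GNode.lam b) = 0 from fun _ _ => hg0 hg _ _ rfl,
    show ∀ a b, g (GNode.nu a) (GNode.lam b) = 0 from fun _ _ => hg0 hg _ _ rfl,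
    show ∀ a b, g (GNode.mu a) (GNode.lam b) = 0 from fun _ _ => hg0 hg _ _ rfl,
    show ∀ a b, g (GNode.lam a) (GNode.nu b) = 0 from fun _ _ => hg0 hg _ _ rfl] using hc

lemma M2 (j : Fin n) : g .s (.nu j) = ∑ i, g (.nu j) (.mu i) := by
  have z1 : ∀ u : GNode n m, g u .s = 0 := fun u => by cases u <;> exact hg0 hg _ _ rfl
  have hc := hg.2.2 (.nu j) (by simp) (by simp)
  rw [sumG (fun u => g u (.nu j)), sumG (fun w => g (.nu j) w)] at hc
  simpa [z1, hg0 hg .t (.nu j) rfl, hg0 hg (.nu j) .t rfl,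
    show ∀ a, g (GNode.lam a) (GNode.nu j) = 0 from fun _ => hg0 hg _ _ rfl,
    show ∀ a, g (GNode.nu a) (GNode.nu j) = 0 from fun _ => hg0 hg _ _ rfl,
    show ∀ a, g (GNode.mu a) (GNode.nu j) = 0 from fun _ => hg0 hg _ _ rfl,
    show ∀ a, g (GNode.nu j) (GNode.lam a) = 0 from fun _ => hg0 hg _ _ rfl,
    show ∀ a, g (GNode.nu j) (GNode.nu a) = 0 from fun _ => hg0 hg _ _ rfl] using hc

lemma M3 (j : Fin n) :
    (∑ i, g (.lam i) (.mu j)) + (∑ i, g (.nu i) (.mu j)) = g (.mu j) .t := by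
  have z1 : ∀ u : GNode n m, g u .s = 0 := fun u => by cases u <;> exact hg0 hg _ _ rfl
  have hc := hg.2.2 (.mu j) (by simp) (by simp)
  rw [sumG (fun u => g u (.mu j)), sumG (fun w => g (.mu j) w)] at hc
  simpa [z1, hg0 hg .s (.mu j) rfl, hg0 hg .t (.mu j) rfl,
    show ∀ a, g (GNode.mu a) (GNode.mu j) = 0 from fun _ => hg0 hg _ _ rfl,
    show ∀ a, g (GNode.mu j) (GNode.lam a) = 0 from fun _ => hg0 hg _ _ rfl,
    show ∀ a, g (GNode.mu j) (GNode.nu a) = 0 from fun _ => hg0 hg _ _ rfl,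
    show ∀ a, g (GNode.mu j) (GNode.mu a) = 0 from fun _ => hg0 hg _ _ rfl] using hc

end Aux

/-! #### The forward construction: aggregating a flow on `𝒢̂` into a flow on `𝒢` -/

def flowHtoG {n m k q : ℕ} (f : HNode n m k q → HNode n m k q → ℝ) :
    GNode n m → GNode n m → ℝ
  | .s, .lam i => ∑ l, f .s (.lam l i)
  | .s, .nu j => ∑ l, ∑ p, f .s (.nu l p j)
  | .lam i, .mu j => ∑ l, ∑ p, f (.lam l i) (.mu p j)
  | .nu i, .mu j => ∑ l, ∑ p, f (.nu l p i) (.mu p j)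
  | .mu j, .t => ∑ p, f (.mu p j) .t
  | _, _ => 0

section Fwd

variable {n m : ℕ} {Z : Finset (Fin n × (Fin n ⊕ Fin m))} {k q : ℕ}
variable {f : HNode n m k q → HNode n m k q → ℝ} (hf : IsFlow (capH Z k q) .s .t f)
include hf

lemma fwd_isFlow : IsFlow (capG Z k q) .s .t (flowHtoG f) := by
  refine ⟨?_, ?_, ?_⟩
  · intro u v
    cases u <;> cases v <;>
      first
        | exact le_rfl
        | exact Finset.sum_nonneg fun _ _ => hf.1 _ _
        | exact Finset.sum_nonneg fun _ _ => Finset.sum_nonneg fun _ _ => hf.1 _ _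
  · intro u v
    cases u <;> cases v <;> try exact le_rfl
    case s.lam i =>
      have h1 : ∑ l, f .s (.lam l i) ≤ ∑ l : Fin (k+1), (1:ℝ) :=
        Finset.sum_le_sum fun l _ => hf.2.1 .s (.lam l i)
      calc flowHtoG f .s (.lam i) ≤ ∑ l : Fin (k+1), (1:ℝ) := h1
        _ = capG Z k q .s (.lam i) := by show _ = ((k+1:ℕ):ℝ); simp
    case s.nu j =>
      have h1 : ∑ l, ∑ p, f .s (.nu l p j) ≤ ∑ l : Fin (k+1), ∑ p : Fin q, (1:ℝ) :=
        Finset.sum_le_sum fun l _ => Finset.sum_le_sum fun p _ => hf.2.1 .s (.nu l p j)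
      calc flowHtoG f .s (.nu j) ≤ ∑ l : Fin (k+1), ∑ p : Fin q, (1:ℝ) := h1
        _ = capG Z k q .s (.nu j) := by show _ = ((q*(k+1):ℕ):ℝ); push_cast; simp [mul_comm]
    case lam.mu i j =>
      show (∑ l, ∑ p, f (.lam l i) (.mu p j)) ≤ if (j, Sum.inr i) ∈ Z then ((k+1:ℕ):ℝ) else 0
      by_cases hZ : (j, Sum.inr i) ∈ Z
      · rw [if_pos hZ]
        have h1 : ∀ l : Fin (k+1), (∑ p, f (.lam l i) (.mu p j)) ≤ 1 := by
          intro l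
          have h2 : (∑ p, f (.lam l i) (.mu p j)) ≤ ∑ p, ∑ j', f (.lam l i) (.mu p j') :=
            Finset.sum_le_sum fun p _ =>
              Finset.single_le_sum (f := fun j' => f (.lam l i) (.mu p j'))
                (fun j' _ => hf.1 _ _) (Finset.mem_univ j)
          calc (∑ p, f (.lam l i) (.mu p j)) ≤ ∑ p, ∑ j', f (.lam l i) (.mu p j') := h2
            _ = f .s (.lam l i) := (L1 hf l i).symm
            _ ≤ 1 := hf.2.1 .s (.lam l i)
        calc (∑ l, ∑ p, f (.lam l i) (.mu p j)) ≤ ∑ l : Fin (k+1), (1:ℝ) :=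
              Finset.sum_le_sum fun l _ => h1 l
          _ = ((k+1:ℕ):ℝ) := by simp
      · rw [if_neg hZ]
        have : ∀ (l : Fin (k+1)) (p : Fin q), f (.lam l i) (.mu p j) = 0 :=
          fun l p => hf0 hf _ _ (if_neg hZ)
        simp [this]
    case nu.mu i j =>
      show (∑ l, ∑ p, f (.nu l p i) (.mu p j)) ≤ if (j, Sum.inl i) ∈ Z then ((q*(k+1):ℕ):ℝ) else 0
      by_cases hZ : (j, Sum.inl i) ∈ Z
      · rw [if_pos hZ]
        calc (∑ l, ∑ p, f (.nu l p i) (.mu p j)) ≤ ∑ l : Fin (k+1), ∑ p : Fin q, (1:ℝ) :=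
              Finset.sum_le_sum fun l _ => Finset.sum_le_sum fun p _ => by
                calc f (.nu l p i) (.mu p j) ≤ capH Z k q (.nu l p i) (.mu p j) := hf.2.1 _ _
                  _ ≤ 1 := by simp [capH]; split <;> norm_num
          _ = ((q*(k+1):ℕ):ℝ) := by push_cast; simp [mul_comm]
      · rw [if_neg hZ]
        have : ∀ (l : Fin (k+1)) (p : Fin q), f (.nu l p i) (.mu p j) = 0 :=
          fun l p => hf0 hf _ _ (by simp [capH, hZ])
        simp [this]
    case mu.t j =>
      have h1 : ∑ p, f (.mu p j) .t ≤ ∑ p : Fin q, (1:ℝ) :=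
        Finset.sum_le_sum fun p _ => hf.2.1 (.mu p j) .t
      calc flowHtoG f (.mu j) .t ≤ ∑ p : Fin q, (1:ℝ) := h1
        _ = capG Z k q (.mu j) .t := by show _ = ((q:ℕ):ℝ); simp
  · intro v hvs hvt
    rw [sumG (fun u => flowHtoG f u v), sumG (fun w => flowHtoG f v w)]
    cases v with
    | s => exact absurd rfl hvs
    | t => exact absurd rfl hvt
    | lam i =>
      simp only [flowHtoG, Finset.sum_const_zero, add_zero, zero_add]
      rw [Finset.sum_congr rfl (fun l (_ : l ∈ Finset.univ) => L1 hf l i)]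
      exact sum_rot _
    | nu j =>
      simp only [flowHtoG, Finset.sum_const_zero, add_zero, zero_add]
      rw [Finset.sum_congr rfl (fun l (_ : l ∈ Finset.univ) =>
        Finset.sum_congr rfl (fun p _ => L2 hf l p j))]
      exact sum_rot _
    | mu j =>
      simp only [flowHtoG, Finset.sum_const_zero, add_zero, zero_add]
      rw [Finset.sum_congr rfl (fun p (_ : p ∈ Finset.univ) => (L3 hf p j).symm),
        Finset.sum_add_distrib]
      congr 1
      · rw [sum_rot]
        exact Finset.sum_congr rfl fun p _ => Finset.sum_comm
      · rw [sum_rot]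
        exact Finset.sum_congr rfl fun p _ => Finset.sum_comm

end Fwd

section Fwd2
variable {n m : ℕ} {Z : Finset (Fin n × (Fin n ⊕ Fin m))} {k q : ℕ}
variable {f : HNode n m k q → HNode n m k q → ℝ} (hf : IsFlow (capH Z k q) .s .t f)
include hf

lemma fwd_value : flowValue GNode.s (flowHtoG f) = flowValue HNode.s f := by
  rw [flowValue, flowValue, sumG (fun w => flowHtoG f GNode.s w), sumH (fun w => f HNode.s w)]
  simp only [flowHtoG, Finset.sum_const_zero, add_zero, zero_add,
    hf0 hf .s .s rfl, hf0 hf .s .t rfl,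
    show ∀ a b, f HNode.s (HNode.mu a b) = 0 from fun _ _ => hf0 hf _ _ rfl]
  congr 1
  · exact Finset.sum_comm
  · exact (sum_rot fun l p j => f HNode.s (.nu l p j)).symm
end Fwd2

/-! #### The backward construction: splitting a flow on `𝒢` into a flow on `𝒢̂` -/

noncomputable def flowGtoH {n m : ℕ} (k q : ℕ) (g : GNode n m → GNode n m → ℝ) :
    HNode n m k q → HNode n m k q → ℝ
  | .s, .lam _ i => g .s (.lam i) / ((k:ℝ)+1)
  | .s, .nu _ _ j => g .s (.nu j) / (((k:ℝ)+1) * (q:ℝ))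
  | .lam _ i, .mu _ j => g (.lam i) (.mu j) / (((k:ℝ)+1) * (q:ℝ))
  | .nu _ a i, .mu b j => if a = b then g (.nu i) (.mu j) / (((k:ℝ)+1) * (q:ℝ)) else 0
  | .mu _ j, .t => g (.mu j) .t / (q:ℝ)
  | _, _ => 0

section Bwd

variable {n m : ℕ} {Z : Finset (Fin n × (Fin n ⊕ Fin m))} {k q : ℕ} (hq : 1 ≤ q)
variable {g : GNode n m → GNode n m → ℝ} (hg : IsFlow (capG Z k q) .s .t g)
include hq hg

lemma bwd_isFlow : IsFlow (capH Z k q) .s .t (flowGtoH k q g) := by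
  have hK : (0:ℝ) < (k:ℝ)+1 := by positivity
  have hQ : (0:ℝ) < (q:ℝ) := by exact_mod_cast hq
  refine ⟨?_, ?_, ?_⟩
  · intro u v
    cases u <;> cases v <;> simp only [flowGtoH]
    all_goals try exact le_rfl
    all_goals try exact div_nonneg (hg.1 _ _) (by positivity)
    all_goals split
    all_goals try exact le_rfl
    all_goals exact div_nonneg (hg.1 _ _) (by positivity)
  · intro u v
    cases u <;> cases v <;> simp only [flowGtoH, capH]
    all_goals try exact le_rfl
    case s.lam l i =>
      rw [div_le_one hK]
      have h := hg.2.1 GNode.s (GNode.lam i)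
      simpa [capG] using h
    case s.nu l p j =>
      rw [div_le_one (by positivity)]
      have h := hg.2.1 GNode.s (GNode.nu j)
      simp only [capG] at h
      push_cast at h ⊢
      linarith [h]
    case lam.mu l i p j =>
      by_cases hZ : (j, Sum.inr i) ∈ Z
      · rw [if_pos hZ, div_le_one (by positivity)]
        have h := hg.2.1 (GNode.lam i) (GNode.mu j)
        simp only [capG, if_pos hZ] at h
        push_cast at h
        have hq1 : (1:ℝ) ≤ (q:ℝ) := by exact_mod_cast hq
        nlinarith [h, hK]
      · rw [if_neg hZ]
        have h0 : g (GNode.lam i) (GNode.mu j) = 0 := hg0 hg _ _ (by simp [capG, hZ])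
        simp [h0]
    case nu.mu l a i b j =>
      by_cases hab : a = b
      · by_cases hZ : (j, Sum.inl i) ∈ Z
        · rw [if_pos hab, if_pos ⟨hab, hZ⟩, div_le_one (by positivity)]
          have h := hg.2.1 (GNode.nu i) (GNode.mu j)
          simp only [capG, if_pos hZ] at h
          push_cast at h
          linarith [h]
        · have h0 : g (GNode.nu i) (GNode.mu j) = 0 := hg0 hg _ _ (by simp [capG, hZ])
          simp [hab, hZ, h0]
      · simp [hab]
    case mu.t p j =>
      rw [div_le_one hQ]
      have h := hg.2.1 (GNode.mu j) GNode.t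
      simpa [capG] using h
  · intro v hvs hvt
    have hK0 : ((k:ℝ)+1) ≠ 0 := ne_of_gt hK
    have hQ0 : ((q:ℝ)) ≠ 0 := ne_of_gt hQ
    rw [sumH (fun u => flowGtoH k q g u v), sumH (fun w => flowGtoH k q g v w)]
    cases v with
    | s => exact absurd rfl hvs
    | t => exact absurd rfl hvt
    | lam l i =>
      simp only [flowGtoH, Finset.sum_const_zero, add_zero, zero_add]
      rw [M1 hg i]
      simp only [← Finset.sum_div, Finset.sum_const, Finset.card_univ, Fintype.card_fin,
        nsmul_eq_mul]
      field_simp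
    | nu l p j =>
      simp only [flowGtoH, Finset.sum_const_zero, add_zero, zero_add]
      have step : ∀ p' : Fin q,
          (∑ i, if p = p' then g (GNode.nu j) (GNode.mu i) / (((k:ℝ)+1)*(q:ℝ)) else 0)
            = if p = p' then ∑ i, g (GNode.nu j) (GNode.mu i) / (((k:ℝ)+1)*(q:ℝ)) else 0 := by
        intro p'; split <;> simp
      rw [Finset.sum_congr rfl (fun p' _ => step p'), Finset.sum_ite_eq]
      simp only [Finset.mem_univ, if_true]
      rw [M2 hg j, Finset.sum_div]
    | mu p j =>
      simp only [flowGtoH, Finset.sum_const_zero, add_zero, zero_add]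
      have step : ∀ (l : Fin (k+1)) (p' : Fin q),
          (∑ i, if p' = p then g (GNode.nu i) (GNode.mu j) / (((k:ℝ)+1)*(q:ℝ)) else 0)
            = if p' = p then ∑ i, g (GNode.nu i) (GNode.mu j) / (((k:ℝ)+1)*(q:ℝ)) else 0 := by
        intro l p'; split <;> simp
      rw [Finset.sum_congr rfl (fun l (_ : l ∈ Finset.univ) =>
        Finset.sum_congr rfl (fun p' _ => step l p'))]
      simp only [Finset.sum_ite_eq', Finset.mem_univ, if_true]
      rw [← M3 hg j]
      simp only [← Finset.sum_div, Finset.sum_const, Finset.card_univ, Fintype.card_fin,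
        nsmul_eq_mul]
      field_simp
      push_cast
      ring

lemma bwd_value : flowValue HNode.s (flowGtoH k q g) = flowValue GNode.s g := by
  have hK0 : ((k:ℝ)+1) ≠ 0 := by positivity
  have hQ0 : ((q:ℝ)) ≠ 0 := by
    have : (0:ℝ) < (q:ℝ) := by exact_mod_cast hq
    exact ne_of_gt this
  rw [flowValue, flowValue, sumH (fun w => flowGtoH k q g HNode.s w),
    sumG (fun w => g GNode.s w)]
  simp only [flowGtoH, Finset.sum_const_zero, add_zero, zero_add,
    hg0 hg .s .s rfl, hg0 hg .s .t rfl,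
    show ∀ a, g GNode.s (GNode.mu a) = 0 from fun _ => hg0 hg _ _ rfl]
  simp only [← Finset.sum_div, Finset.sum_const, Finset.card_univ, Fintype.card_fin,
    nsmul_eq_mul]
  push_cast
  field_simp

end Bwd

/-- the maximum flow value `θ̂(k,q)` on the unit-capacity digraph `𝒢̂`
equals the maximum flow value `θ(k,q)` on the weighted digraph `𝒢`. -/
theorem stmt5 {n m : ℕ} (hn : 0 < n) (hm : 0 < m)
    (Z : Finset (Fin n × (Fin n ⊕ Fin m))) (k q : ℕ) (hq : 1 ≤ q) :
    maxFlow (capH Z k q) HNode.s HNode.t = maxFlow (capG Z k q) GNode.s GNode.t := by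
  unfold maxFlow
  congr 1
  ext x
  simp only [Set.mem_setOf_eq]
  constructor
  · rintro ⟨f, hf, rfl⟩
    exact ⟨flowHtoG f, fwd_isFlow hf, (fwd_value hf).symm⟩
  · rintro ⟨g, hg, rfl⟩
    exact ⟨flowGtoH k q g, bwd_isFlow hq hg, (bwd_value hq hg).symm⟩
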